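/- Let E(x,y) = Σ_{n,k≥0} e_{n,k} y^k x^n where e_{n,k} is the number of Dyck paths of semilength n with exactly k exterior pairs. Then E satisfies E = 1 + x·(y·E + (1-y)/(1-x))·E as formal power series. -/

import Mathlib

/-- A Dyck path of semilength `n`, encoded as a list of booleans where
`true` is an up step `(1,1)` and `false` is a down step `(1,-1)`;
the path never goes below the x-axis. -/
def IsDyckPath (n : ℕ) (p : List Bool) : Prop :=
  p.length = 2 * n ∧ p.count true = n ∧
  ∀ i, (p.take i).count false ≤ (p.take i).count true

/-- The height of the `i`-th step: the y-coordinate reached after step `i`.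
For an up step this is the height `h` such that the step rises from `y = h-1` to `y = h`. -/
def stepHeight (p : List Bool) (i : ℕ) : ℕ :=
  (p.take (i + 1)).count true - (p.take (i + 1)).count false

/-- The number of up steps of `p` at height `h` with `h ≡ c (mod m)`. -/
def upStepsMod (m c : ℕ) (p : List Bool) : ℕ :=
  ((Finset.range p.length).filter
    (fun i => p.getD i false = true ∧ stepHeight p i % m = c)).card


/-- The up step at position `i` is matched with the down step at position `j`:
the steps strictly between them form a balanced nonnegative (Dyck) word. -/
def Matched (p : List Bool) (i j : ℕ) : Prop :=
  i < j ∧ j < p.length ∧ p.getD i false = true ∧ p.getD j true = false ∧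
  (((p.drop (i + 1)).take (j - i - 1)).count true =
      ((p.drop (i + 1)).take (j - i - 1)).count false) ∧
  ∀ k < j - i - 1,
    ((((p.drop (i + 1)).take (j - i - 1)).take k).count false ≤
      (((p.drop (i + 1)).take (j - i - 1)).take k).count true)

/-- The section of `p` from position `a` to position `b` (inclusive) is a pyramid
`U^h D^h`. -/
def IsPyramidSec (p : List Bool) (a b : ℕ) : Prop :=
  a ≤ b ∧ b < p.length ∧ b - a + 1 = 2 * ((b - a + 1) / 2) ∧
  (p.drop a).take (b - a + 1) =
    List.replicate ((b - a + 1) / 2) true ++ List.replicate ((b - a + 1) / 2) false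

/-- A matched pair `(i, j)` is exterior if it does not belong to any pyramid,
equivalently the section of the path from `i` to `j` is not of the form `U^t D^t`. -/
def ExteriorPair (p : List Bool) (i j : ℕ) : Prop :=
  Matched p i j ∧ ¬ IsPyramidSec p i j

open scoped Classical in
/-- The number of exterior pairs of `p`. -/
noncomputable def exteriorPairs (p : List Bool) : ℕ :=
  ((Finset.range p.length ×ˢ Finset.range p.length).filter
    (fun q : ℕ × ℕ => ExteriorPair p q.1 q.2)).card



open MvPowerSeries in
/-- `E(x,y) = Σ e_{n,k} y^k x^n` where `e_{n,k}` is the number of Dyck paths of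
semilength `n` with exactly `k` exterior pairs; `X 0` is `x` and `X 1` is `y`. -/
noncomputable def E : MvPowerSeries (Fin 2) ℚ :=
  fun d => (Nat.card {p : List Bool // IsDyckPath (d 0) p ∧ exteriorPairs p = d 1} : ℚ)

namespace Ext

/-- balanced, nonnegative -/
def Dyck (p : List Bool) : Prop :=
  p.count true = p.count false ∧ ∀ i, (p.take i).count false ≤ (p.take i).count true

lemma length_eq_counts (l : List Bool) : l.length = l.count true + l.count false := by
  induction l with
  | nil => simp
  | cons a l ih =>
    rw [List.length_cons, List.count_cons, List.count_cons, ih]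
    cases a <;> simp <;> omega

lemma isDyckPath_iff (n : ℕ) (p : List Bool) :
    IsDyckPath n p ↔ Dyck p ∧ p.count true = n := by
  constructor
  · rintro ⟨h1, h2, h3⟩
    have := length_eq_counts p
    exact ⟨⟨by omega, h3⟩, h2⟩
  · rintro ⟨⟨h1, h2⟩, h3⟩
    have := length_eq_counts p
    exact ⟨by omega, h3, h2⟩

lemma dyck_nil : Dyck [] := ⟨rfl, by simp⟩

lemma dyck_head {p : List Bool} (h : Dyck p) (hne : p ≠ []) : ∃ q, p = true :: q := by
  cases p with
  | nil => exact absurd rfl hne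
  | cons b q =>
    cases b with
    | false =>
      have := h.2 1
      simp at this
    | true => exact ⟨q, rfl⟩

lemma exists_decomp {p : List Bool} (h : Dyck p) (hne : p ≠ []) :
    ∃ A B, Dyck A ∧ Dyck B ∧ p = true :: A ++ false :: B := by
  obtain ⟨q, rfl⟩ := dyck_head h hne
  have hbal : q.count false = q.count true + 1 := by
    have := h.1; simp [List.count_cons] at this; omega
  have hq : q ≠ [] := by
    rintro rfl; simp at hbal
  have hex : ∃ j, (q.take (j+1)).count false = (q.take (j+1)).count true + 1 := by
    refine ⟨q.length - 1, ?_⟩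
    have : q.length - 1 + 1 = q.length := by
      have : q.length ≠ 0 := by simpa using hq
      omega
    rw [this, List.take_length]
    exact hbal
  classical
  set j := Nat.find hex with hjdef
  have hj : (q.take (j+1)).count false = (q.take (j+1)).count true + 1 := Nat.find_spec hex
  have hmin : ∀ i < j, ¬((q.take (i+1)).count false = (q.take (i+1)).count true + 1) :=
    fun i hi => Nat.find_min hex hi
  have hjlt : j < q.length := by
    have h1 : j ≤ q.length - 1 := Nat.find_min' hex (by
      have : q.length - 1 + 1 = q.length := by
        have : q.length ≠ 0 := by simpa using hq
        omega
      rw [this, List.take_length]; exact hbal)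
    have : q.length ≠ 0 := by simpa using hq
    omega
  -- prefixes of q up to j are nonneg
  have hpre : ∀ i ≤ j, (q.take i).count false ≤ (q.take i).count true := by
    intro i hi
    by_contra hcon
    push_neg at hcon
    have hub : (q.take i).count false ≤ (q.take i).count true + 1 := by
      have := h.2 (i+1)
      rw [List.take_succ_cons] at this
      simp [List.count_cons] at this
      omega
    have heq : (q.take i).count false = (q.take i).count true + 1 := by omega
    cases i with
    | zero => simp at heq
    | succ i' =>
      have hi' : i' < j := by omega
      exact hmin i' hi' heq
  have htake : q.take (j+1) = q.take j ++ [q[j]] := by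
    rw [← List.take_concat_get hjlt]
    simp
  have hgf : q[j] = false := by
    by_contra hcon
    have hT : q[j] = true := by
      cases hq' : q[j] <;> simp_all
    rw [htake, hT] at hj
    simp [List.count_append] at hj
    have := hpre j le_rfl
    omega
  have hAbal : (q.take j).count false = (q.take j).count true := by
    rw [htake, hgf] at hj
    simp [List.count_append] at hj
    omega
  refine ⟨q.take j, q.drop (j+1), ⟨hAbal.symm, ?_⟩, ⟨?_, ?_⟩, ?_⟩
  · intro i
    rw [List.take_take]
    exact hpre _ (min_le_right _ _)
  · -- balance of B
    have hqsplit : q = q.take j ++ false :: q.drop (j+1) := by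
      conv_lhs => rw [← List.take_append_drop j q]
      rw [List.drop_eq_getElem_cons hjlt, hgf]
    have hcT : q.count true = (q.take j).count true + (q.drop (j+1)).count true := by
      conv_lhs => rw [hqsplit]
      simp [List.count_append, List.count_cons]
    have hcF : q.count false = (q.take j).count false + 1 + (q.drop (j+1)).count false := by
      conv_lhs => rw [hqsplit]
      simp [List.count_append, List.count_cons]
      omega
    omega
  · -- nonneg of B
    intro i
    have hqsplit : q = q.take j ++ false :: q.drop (j+1) := by
      conv_lhs => rw [← List.take_append_drop j q]
      rw [List.drop_eq_getElem_cons hjlt, hgf]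
    have hlen : (q.take j).length = j := by
      rw [List.length_take]; omega
    have htk : q.take (j+1+i) = q.take j ++ false :: (q.drop (j+1)).take i := by
      conv_lhs => rw [hqsplit]
      rw [List.take_append]
      congr 1
      · rw [List.take_of_length_le]; rw [hlen]; omega
      · rw [hlen]
        have : j + 1 + i - j = i + 1 := by omega
        rw [this, List.take_succ_cons]
    have := h.2 (j+1+i+1)
    rw [List.take_succ_cons, htk] at this
    simp [List.count_append, List.count_cons] at this
    omega
  · conv_lhs => rw [show q = q.take j ++ false :: q.drop (j+1) from by
      conv_lhs => rw [← List.take_append_drop j q]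
      rw [List.drop_eq_getElem_cons hjlt, hgf]]
    simp

lemma decomp_unique {A B A' B' : List Bool} (hA : Dyck A) (hA' : Dyck A')
    (h : true :: A ++ false :: B = true :: A' ++ false :: B') : A = A' ∧ B = B' := by
  have key : ∀ (X Y X' Y' : List Bool), Dyck X → Dyck X' →
      X ++ false :: Y = X' ++ false :: Y' → X.length < X'.length → False := by
    intro X Y X' Y' hX hX' heq hlen
    have htk : X'.take X.length = X := by
      have h1 := congrArg (List.take X.length) heq
      rw [List.take_append, List.take_append] at h1
      rw [List.take_of_length_le (le_refl _), Nat.sub_self, List.take_zero,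
        List.append_nil, Nat.sub_eq_zero_of_le (le_of_lt hlen), List.take_zero,
        List.append_nil] at h1
      exact h1.symm
    have hgetF : X'[X.length]'hlen = false := by
      have h2 := congrArg (fun l => l.getD X.length true) heq
      simp only [List.getD_eq_getElem?_getD] at h2
      rw [List.getElem?_append_right (le_refl _), Nat.sub_self] at h2
      rw [List.getElem?_append_left hlen] at h2
      rw [List.getElem?_eq_getElem hlen] at h2
      simp at h2
      simpa using h2.symm
    have htk1 : X'.take (X.length + 1) = X ++ [false] := by
      rw [← List.take_concat_get hlen, htk, hgetF]
      simp
    have := hX'.2 (X.length + 1)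
    rw [htk1] at this
    simp [List.count_append] at this
    have hbX := hX.1
    omega
  have h' : A ++ false :: B = A' ++ false :: B' := by
    simpa using h
  have hlen : A.length = A'.length := by
    rcases Nat.lt_trichotomy A.length A'.length with hl | hl | hl
    · exact absurd (key A B A' B' hA hA' h' hl) (by simp)
    · exact hl
    · exact absurd (key A' B' A B hA' hA h'.symm hl) (by simp)
  have hAA : A = A' := by
    have h1 := congrArg (List.take A.length) h'
    rw [List.take_append, List.take_append] at h1
    rw [List.take_of_length_le (le_refl _), Nat.sub_self, List.take_zero,
      List.append_nil, List.take_of_length_le (by omega), hlen, Nat.sub_self,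
      List.take_zero, List.append_nil] at h1
    exact h1
  subst hAA
  refine ⟨rfl, ?_⟩
  have := List.append_cancel_left h'
  simpa using this


section Decomp

variable (A B : List Bool)

local notation "L" => A.length
local notation "p" => true :: A ++ false :: B

lemma plen : (p).length = L + B.length + 2 := by simp; omega

lemma g0 (d : Bool) : (p).getD 0 d = true := rfl

lemma g1 (d : Bool) (i : ℕ) (h : i < L) : (p).getD (i+1) d = A.getD i d := by
  show (true :: (A ++ false :: B)).getD (i+1) d = _
  rw [List.getD_cons_succ, List.getD_append _ _ _ _ h]

lemma g2 (d : Bool) : (p).getD (L+1) d = false := by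
  show (true :: (A ++ false :: B)).getD (L+1) d = false
  rw [List.getD_cons_succ, List.getD_append_right _ _ _ _ (le_refl _), Nat.sub_self]
  rfl

lemma g3 (d : Bool) (i : ℕ) : (p).getD (L+2+i) d = B.getD i d := by
  show (true :: (A ++ false :: B)).getD (L+2+i) d = _
  have h1 : L + 2 + i = (L + 1 + i) + 1 := by omega
  rw [h1, List.getD_cons_succ, List.getD_append_right _ _ _ _ (by omega)]
  have h2 : L + 1 + i - L = i + 1 := by omega
  rw [h2, List.getD_cons_succ]

lemma s1 (i : ℕ) (h : i ≤ L) : (p).drop (i+1) = A.drop i ++ false :: B := by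
  show (true :: (A ++ false :: B)).drop (i+1) = _
  rw [List.drop_succ_cons, List.drop_append,
    Nat.sub_eq_zero_of_le h, List.drop_zero]

lemma s2 (i : ℕ) : (p).drop (L+2+i) = B.drop i := by
  show (true :: (A ++ false :: B)).drop (L+2+i) = _
  have h1 : L + 2 + i = (L + 1 + i) + 1 := by omega
  rw [h1, List.drop_succ_cons, List.drop_append,
    List.drop_of_length_le (by omega)]
  have h2 : L + 1 + i - L = i + 1 := by omega
  rw [h2, List.drop_succ_cons, List.nil_append]

lemma s3 (i m : ℕ) (h : i ≤ L) (hm : m ≤ L - i) :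
    ((p).drop (i+1)).take m = (A.drop i).take m := by
  rw [s1 A B i h, List.take_append]
  have : m - (A.drop i).length = 0 := by
    rw [List.length_drop]; omega
  rw [this, List.take_zero, List.append_nil]

end Decomp


section Decomp2

variable {A B : List Bool}

local notation "L" => A.length
local notation "p" => true :: A ++ false :: B

lemma count_take_le_of_dyck {C : List Bool} (hC : Dyck C) (i : ℕ) :
    (C.take i).count false ≤ (C.take i).count true := hC.2 i

/-- height after an up step is positive: if C[i] = true then
count true (C.take (i+1)) ≥ count false + 1 -/
lemma up_pos {C : List Bool} (hC : Dyck C) {i : ℕ} (hi : i < C.length)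
    (hg : C[i] = true) :
    (C.take (i+1)).count false + 1 ≤ (C.take (i+1)).count true := by
  have ht : C.take (i+1) = C.take i ++ [C[i]] := by
    rw [← List.take_concat_get hi]; simp
  rw [ht, hg]
  simp [List.count_append]
  exact hC.2 i

/-- the drop after an up step has strictly more falses than trues -/
lemma drop_after_up {C : List Bool} (hC : Dyck C) {i : ℕ} (hi : i < C.length)
    (hg : C[i] = true) :
    (C.drop (i+1)).count true + 1 ≤ (C.drop (i+1)).count false := by
  have hsplit := List.take_append_drop (i+1) C
  have h1 : C.count true = (C.take (i+1)).count true + (C.drop (i+1)).count true := by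
    conv_lhs => rw [← hsplit, List.count_append]
  have h2 : C.count false = (C.take (i+1)).count false + (C.drop (i+1)).count false := by
    conv_lhs => rw [← hsplit, List.count_append]
  have := up_pos hC hi hg
  have := hC.1
  omega

lemma m0 (hA : Dyck A) : Matched p 0 (L+1) := by
  refine ⟨by omega, by rw [plen]; omega, g0 A B false, g2 A B true, ?_, ?_⟩
  · have h1 : ((p).drop 1).take (L + 1 - 0 - 1) = A := by
      have := s3 A B 0 L (by omega) (by omega)
      simpa using this
    rw [h1]; exact hA.1
  · intro k hk
    have h1 : ((p).drop 1).take (L + 1 - 0 - 1) = A := by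
      have := s3 A B 0 L (by omega) (by omega)
      simpa using this
    rw [h1]; exact hA.2 k

lemma mA (i j : ℕ) (h : Matched A i j) : Matched p (i+1) (j+1) := by
  obtain ⟨hij, hjl, hgi, hgj, hbal, hnn⟩ := h
  have hseg : ((p).drop (i+1+1)).take (j+1-(i+1)-1) = ((A.drop (i+1)).take (j-i-1)) := by
    have h1 : j+1-(i+1)-1 = j-i-1 := by omega
    rw [h1]
    exact s3 A B (i+1) (j-i-1) (by omega) (by omega)
  refine ⟨by omega, by rw [plen]; omega, ?_, ?_, ?_, ?_⟩
  · rw [g1 A B false i (by omega)]; exact hgi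
  · rw [g1 A B true j hjl]; exact hgj
  · rw [hseg]; exact hbal
  · intro k hk
    rw [hseg]
    exact hnn k (by omega)

lemma mB (i j : ℕ) (h : Matched B i j) : Matched p (L+2+i) (L+2+j) := by
  obtain ⟨hij, hjl, hgi, hgj, hbal, hnn⟩ := h
  have hd : (p).drop (L+2+i+1) = B.drop (i+1) := by
    have : L+2+i+1 = L+2+(i+1) := by omega
    rw [this, s2]
  have hsub : L+2+j - (L+2+i) - 1 = j - i - 1 := by omega
  refine ⟨by omega, by rw [plen]; omega, ?_, ?_, ?_, ?_⟩
  · rw [g3 A B false i]; exact hgi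
  · rw [g3 A B true j]; exact hgj
  · rw [hd, hsub]; exact hbal
  · intro k hk
    rw [hd, hsub]
    exact hnn k (by omega)

lemma matched_classify (hA : Dyck A) (hB : Dyck B) {i j : ℕ} (h : Matched p i j) :
    (i = 0 ∧ j = L + 1) ∨
    (1 ≤ i ∧ i ≤ L ∧ 1 ≤ j ∧ j ≤ L ∧ Matched A (i-1) (j-1)) ∨
    (L + 2 ≤ i ∧ L + 2 ≤ j ∧ Matched B (i-L-2) (j-L-2)) := by
  obtain ⟨hij, hjlen, hgi, hgj, hbal, hnn⟩ := h
  rw [plen] at hjlen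
  -- case on i
  rcases Nat.lt_trichotomy i (L+1) with hi | hi | hi
  · rcases Nat.eq_zero_or_pos i with rfl | hipos
    · -- i = 0 : show j = L+1
      left
      refine ⟨rfl, ?_⟩
      by_contra hne
      rcases Nat.lt_trichotomy j (L+1) with hj | hj | hj
      · -- j ≤ L : contradiction with hA
        have hj1 : 1 ≤ j := hij
        have hjA : j - 1 < L := by omega
        have hgj' : A.getD (j-1) true = false := by
          rw [← g1 A B true (j-1) hjA]
          have : j - 1 + 1 = j := by omega
          rw [this]; exact hgj
        have hgA : A[j-1]'hjA = false := by
          rw [List.getD_eq_getElem _ _ hjA] at hgj'; exact hgj'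
        have hseg : ((p).drop 1).take (j - 0 - 1) = A.take (j-1) := by
          have := s3 A B 0 (j-0-1) (by omega) (by omega)
          simpa using this
        rw [hseg] at hbal
        have htb : A.take (j-1+1) = A.take (j-1) ++ [A[j-1]'hjA] :=
          by simpa using (List.take_concat_get hjA).symm
        have h5 := hA.2 (j-1+1)
        rw [htb, hgA] at h5
        simp [List.count_append] at h5
        omega
      · exact hne hj
      · -- j ≥ L+2
        have hsegfull : (p).drop 1 = A ++ false :: B := by
          have := s1 A B 0 (by omega)
          simpa using this
        rcases Nat.lt_or_ge (L+2) j with hj2 | hj2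
        · -- j > L+2, use hnn at L+1
          have hk := hnn (L+1) (by omega)
          have hseg2 : (((p).drop 1).take (j - 0 - 1)).take (L+1) = A ++ [false] := by
            rw [List.take_take, min_eq_left (by omega), hsegfull,
              List.take_append, List.take_of_length_le (by omega)]
            have : L + 1 - L = 1 := by omega
            rw [this]
            rfl
          rw [hseg2] at hk
          simp [List.count_append] at hk
          have := hA.1
          omega
        · -- j = L+2
          have hjeq : j = L + 2 := by omega
          have hseg2 : ((p).drop 1).take (j - 0 - 1) = A ++ [false] := by
            rw [hjeq, hsegfull]
            have : L + 2 - 0 - 1 = L + 1 := by omega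
            rw [this, List.take_append, List.take_of_length_le (by omega)]
            have : L + 1 - L = 1 := by omega
            rw [this]
            rfl
          rw [hseg2] at hbal
          simp [List.count_append] at hbal
          have := hA.1
          omega
    · -- 1 ≤ i ≤ L
      have hiL : i ≤ L := by omega
      have hiA : i - 1 < L := by omega
      have hgi' : A[i-1]'hiA = true := by
        have : A.getD (i-1) false = true := by
          rw [← g1 A B false (i-1) hiA]
          have : i - 1 + 1 = i := by omega
          rw [this]; exact hgi
        rw [List.getD_eq_getElem _ _ hiA] at this; exact this
      -- the remainder of A after i has count excess of falses
      have hrem := drop_after_up hA hiA hgi'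
      have hio : i - 1 + 1 = i := by omega
      rcases Nat.lt_trichotomy j (L+1) with hj | hj | hj
      · -- j ≤ L : inner A pair
        right; left
        have hjA : j - 1 < L := by omega
        have hgj' : A[j-1]'hjA = false := by
          have : A.getD (j-1) true = false := by
            rw [← g1 A B true (j-1) hjA]
            have : j - 1 + 1 = j := by omega
            rw [this]; exact hgj
          rw [List.getD_eq_getElem _ _ hjA] at this; exact this
        have hseg : ((p).drop (i+1)).take (j-i-1) = (A.drop i).take (j-i-1) :=
          s3 A B i (j-i-1) hiL (by omega)
        refine ⟨hipos, hiL, by omega, by omega, by omega, hjA, ?_, ?_, ?_, ?_⟩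
        · rw [List.getD_eq_getElem _ _ hiA, hgi']
        · rw [List.getD_eq_getElem _ _ hjA, hgj']
        · have h6 : (A.drop (i-1+1)).take (j-1-(i-1)-1) =
              ((p).drop (i+1)).take (j-i-1) := by
            rw [show j-1-(i-1)-1 = j-i-1 from by omega, hio]
            exact hseg.symm
          rw [h6]
          exact hbal
        · intro k hk
          have he : j - 1 - (i-1) - 1 = j - i - 1 := by omega
          have h6 : (A.drop (i-1+1)).take (j-1-(i-1)-1) =
              ((p).drop (i+1)).take (j-i-1) := by
            rw [show j-1-(i-1)-1 = j-i-1 from by omega, hio]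
            exact hseg.symm
          rw [h6]
          exact hnn k (by omega)
      · -- j = L+1 : balance fails
        exfalso
        have hseg : ((p).drop (i+1)).take (j-i-1) = A.drop i := by
          rw [hj]
          have h1 : L + 1 - i - 1 = L - i := by omega
          rw [h1, s3 A B i (L-i) hiL (by omega), List.take_of_length_le]
          rw [List.length_drop]
        rw [hseg] at hbal
        rw [hio] at hrem
        omega
      · -- j ≥ L+2 : nonneg fails at k = L - i
        exfalso
        have hk := hnn (L - i) (by omega)
        have hseg : (((p).drop (i+1)).take (j - i - 1)).take (L-i) = A.drop i := by
          rw [List.take_take, min_eq_left (by omega),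
            s3 A B i (L-i) hiL (by omega), List.take_of_length_le]
          rw [List.length_drop]
        rw [hseg] at hk
        rw [hio] at hrem
        omega
  · -- i = L+1 : impossible, p[i] = false
    exfalso
    rw [hi, g2 A B false] at hgi
    exact Bool.false_ne_true hgi
  · -- i ≥ L+2 : B pair
    right; right
    have hi2 : L + 2 ≤ i := by omega
    have hd : (p).drop (i+1) = B.drop (i-L-2+1) := by
      have h1 : i + 1 = L + 2 + (i-L-2+1) := by omega
      rw [h1, s2]
    have hsub : j - i - 1 = (j-L-2) - (i-L-2) - 1 := by omega
    refine ⟨hi2, by omega, by omega, by omega, ?_, ?_, ?_, ?_⟩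
    · rw [← g3 A B false (i-L-2)]
      have : L + 2 + (i-L-2) = i := by omega
      rw [this]; exact hgi
    · rw [← g3 A B true (j-L-2)]
      have : L + 2 + (j-L-2) = j := by omega
      rw [this]; exact hgj
    · rw [← hsub, ← hd]; exact hbal
    · intro k hk
      rw [← hsub] at hk ⊢
      rw [← hd]
      exact hnn k hk

end Decomp2


/-- pyramid words -/
def Pyr (C : List Bool) : Prop :=
  ∃ t, C = List.replicate t true ++ List.replicate t false

lemma pyr_counts (t : ℕ) :
    (List.replicate t true ++ List.replicate t false).count true = t ∧
    (List.replicate t true ++ List.replicate t false).count false = t := by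
  simp [List.count_append, List.count_replicate]

lemma dyck_pyr (t : ℕ) : Dyck (List.replicate t true ++ List.replicate t false) := by
  constructor
  · simp [List.count_append, List.count_replicate]
  · intro i
    simp [List.take_append, List.take_replicate, List.count_append,
      List.count_replicate]

lemma pyr_eq_of_dyck {C : List Bool} (hC : Dyck C) (h : Pyr C) :
    C = List.replicate (C.length / 2) true ++ List.replicate (C.length / 2) false := by
  obtain ⟨t, rfl⟩ := h
  have : (List.replicate t true ++ List.replicate t false).length = 2 * t := by simp; omega
  rw [this]
  simp [Nat.mul_div_cancel_left]

lemma length_even_of_dyck {C : List Bool} (hC : Dyck C) :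
    C.length = 2 * C.count true := by
  have := length_eq_counts C
  have := hC.1
  omega

section Decomp3

variable {A B : List Bool}

local notation "L" => A.length
local notation "p" => true :: A ++ false :: B

lemma pyA {i j : ℕ} (hj : j < L) : IsPyramidSec p (i+1) (j+1) ↔ IsPyramidSec A i j := by
  constructor
  · rintro ⟨h1, h2, h3, h4⟩
    have hij : i ≤ j := by omega
    have he : j + 1 - (i + 1) = j - i := by omega
    rw [he] at h3 h4
    rw [s3 A B i (j - i + 1) (by omega) (by omega)] at h4
    exact ⟨hij, hj, h3, h4⟩
  · rintro ⟨h1, h2, h3, h4⟩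
    have he : j + 1 - (i + 1) = j - i := by omega
    refine ⟨by omega, by rw [plen]; omega, ?_, ?_⟩
    · rw [he]; exact h3
    · rw [he, s3 A B i (j - i + 1) (by omega) (by omega)]
      exact h4

lemma pyB {i j : ℕ} (hi : i ≤ j) : IsPyramidSec p (L+2+i) (L+2+j) ↔ IsPyramidSec B i j := by
  have he : L + 2 + j - (L + 2 + i) = j - i := by omega
  have hd : (p).drop (L+2+i) = B.drop i := s2 A B i
  constructor
  · rintro ⟨h1, h2, h3, h4⟩
    rw [he] at h3 h4
    rw [hd] at h4
    refine ⟨hi, ?_, h3, h4⟩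
    rw [plen] at h2; omega
  · rintro ⟨h1, h2, h3, h4⟩
    refine ⟨by omega, by rw [plen]; omega, ?_, ?_⟩
    · rw [he]; exact h3
    · rw [he, hd]; exact h4

lemma py0 (hA : Dyck A) : IsPyramidSec p 0 (L+1) ↔ Pyr A := by
  have hLe : L = 2 * A.count true := length_even_of_dyck hA
  have hsec : ((p).drop 0).take (L + 1 - 0 + 1) = true :: A ++ [false] := by
    rw [List.drop_zero]
    have h1 : L + 1 - 0 + 1 = (L + 1) + 1 := by omega
    rw [h1]
    show (true :: (A ++ false :: B)).take (L+2) = _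
    rw [List.take_succ_cons, List.take_append,
      List.take_of_length_le (by omega)]
    have h2 : L + 1 - L = 1 := by omega
    rw [h2]
    rfl
  have hh : (L + 1 - 0 + 1) / 2 = L / 2 + 1 := by omega
  constructor
  · rintro ⟨h1, h2, h3, h4⟩
    rw [hsec, hh] at h4
    rw [List.replicate_succ, List.replicate_succ'] at h4
    have h5 : A ++ [false] = List.replicate (L/2) true ++ (List.replicate (L/2) false ++ [false]) := by
      have := List.cons_injective h4
      simpa using this
    rw [← List.append_assoc] at h5
    have h6 : A = List.replicate (L/2) true ++ List.replicate (L/2) false :=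
      List.append_cancel_right h5
    exact ⟨L/2, h6⟩
  · intro h
    have h6 := pyr_eq_of_dyck hA h
    refine ⟨by omega, by rw [plen]; omega, by omega, ?_⟩
    rw [hsec, hh, List.replicate_succ, List.replicate_succ']
    conv_lhs => rw [h6]
    simp

end Decomp3

lemma matched_pyr_isPyr {t i j : ℕ}
    (h : Matched (List.replicate t true ++ List.replicate t false) i j) :
    IsPyramidSec (List.replicate t true ++ List.replicate t false) i j := by
  set P := List.replicate t true ++ List.replicate t false with hP
  obtain ⟨hij, hjlen, hgi, hgj, hbal, hnn⟩ := h
  have hPlen : P.length = 2 * t := by rw [hP]; simp; omega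
  rw [hPlen] at hjlen
  have hit : i < t := by
    by_contra hcon
    push_neg at hcon
    rw [List.getD_append_right _ _ _ _ (by simpa using hcon)] at hgi
    rw [List.getD_eq_getElem _ _ (by simp; omega)] at hgi
    simp at hgi
  have hjt : t ≤ j := by
    by_contra hcon
    push_neg at hcon
    rw [List.getD_append _ _ _ _ (by simpa using hcon)] at hgj
    rw [List.getD_eq_getElem _ _ (by simpa using hcon)] at hgj
    simp at hgj
  -- compute the segment
  have hdrop : P.drop (i+1) = List.replicate (t-i-1) true ++ List.replicate t false := by
    rw [hP, List.drop_append, List.drop_replicate,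
      List.drop_replicate]
    congr 2
    simp
    omega
  have hseg : (P.drop (i+1)).take (j-i-1) =
      List.replicate (t-i-1) true ++ List.replicate (j-t) false := by
    rw [hdrop, List.take_append, List.take_replicate, List.take_replicate]
    congr 2
    · omega
    · simp; omega
  rw [hseg] at hbal
  simp [List.count_append, List.count_replicate] at hbal
  have hjval : j = 2*t - 1 - i := by omega
  refine ⟨by omega, by rw [hPlen]; omega, by omega, ?_⟩
  have h1 : j - i + 1 = 2 * (t - i) := by omega
  rw [h1]
  have h3 : 2 * (t - i) / 2 = t - i := by omega
  rw [h3]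
  rw [hP, List.drop_append]
  simp only [List.length_replicate, List.drop_replicate]
  have h4 : t - (i - t) = t := by omega
  rw [h4, List.take_append]
  simp only [List.length_replicate, List.take_replicate]
  congr 2
  · omega
  · omega

lemma ep_pyr (t : ℕ) : exteriorPairs (List.replicate t true ++ List.replicate t false) = 0 := by
  classical
  rw [exteriorPairs, Finset.card_eq_zero]
  rw [Finset.filter_eq_empty_iff]
  rintro ⟨i, j⟩ _ ⟨hm, hnp⟩
  exact hnp (matched_pyr_isPyr hm)

lemma ep_nil : exteriorPairs [] = 0 := by
  have := ep_pyr 0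
  simpa using this


section Decomp4

variable {A B : List Bool}

local notation "L" => A.length
local notation "p" => true :: A ++ false :: B

open scoped Classical in
lemma ep_decomp (hA : Dyck A) (hB : Dyck B) :
    exteriorPairs p = exteriorPairs A + exteriorPairs B + (if Pyr A then 0 else 1) := by
  classical
  have hplen : (p).length = L + B.length + 2 := plen A B
  set f : ℕ × ℕ → ℕ × ℕ := fun q => (q.1+1, q.2+1) with hf
  set g : ℕ × ℕ → ℕ × ℕ := fun q => (q.1+(L+2), q.2+(L+2)) with hg
  have hinjf : Function.Injective f := by
    rintro ⟨a, b⟩ ⟨a', b'⟩ h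
    simp [hf, Prod.ext_iff] at h
    simp [Prod.ext_iff]
    omega
  have hinjg : Function.Injective g := by
    rintro ⟨a, b⟩ ⟨a', b'⟩ h
    simp [hg, Prod.ext_iff] at h
    simp [Prod.ext_iff]
    omega
  set FA := (Finset.range A.length ×ˢ Finset.range A.length).filter
      (fun q : ℕ × ℕ => ExteriorPair A q.1 q.2) with hFA
  set FB := (Finset.range B.length ×ˢ Finset.range B.length).filter
      (fun q : ℕ × ℕ => ExteriorPair B q.1 q.2) with hFB
  set FP := (Finset.range (p).length ×ˢ Finset.range (p).length).filter
      (fun q : ℕ × ℕ => ExteriorPair p q.1 q.2) with hFP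
  have hset : FP = (FA.image f ∪ FB.image g) ∪
      (if Pyr A then (∅ : Finset (ℕ×ℕ)) else {(0, L+1)}) := by
    ext ⟨i, j⟩
    simp only [hFP, hFA, hFB, Finset.mem_filter, Finset.mem_union, Finset.mem_image,
      Finset.mem_product, Finset.mem_range]
    constructor
    · rintro ⟨⟨hi, hj⟩, hm, hnp⟩
      rcases matched_classify hA hB hm with ⟨rfl, rfl⟩ | ⟨h1, h2, h3, h4, hmA⟩ | ⟨h1, h2, hmB⟩
      · right
        have hnpyr : ¬ Pyr A := fun h => hnp ((py0 hA).mpr h)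
        rw [if_neg hnpyr]
        simp
      · left; left
        have hjA : j - 1 < L := hmA.2.1
        have hiA : i - 1 < L := by
          have := hmA.1
          omega
        refine ⟨(i-1, j-1), ⟨⟨hiA, hjA⟩, hmA, ?_⟩, ?_⟩
        · intro hpy
          apply hnp
          have := (pyA (B := B) hjA).mpr hpy
          have e1 : i - 1 + 1 = i := by omega
          have e2 : j - 1 + 1 = j := by omega
          rwa [e1, e2] at this
        · simp [hf, Prod.ext_iff]
          omega
      · left; right
        have hjB : j - L - 2 < B.length := by
          have := hmB.2.1
          omega
        have hiB : i - L - 2 < j - L - 2 := hmB.1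
        refine ⟨(i-L-2, j-L-2), ⟨⟨by omega, hjB⟩, hmB, ?_⟩, ?_⟩
        · intro hpy
          apply hnp
          have := (pyB (A := A) (le_of_lt hiB)).mpr hpy
          have e1 : L + 2 + (i - L - 2) = i := by omega
          have e2 : L + 2 + (j - L - 2) = j := by omega
          rwa [e1, e2] at this
        · simp [hg, Prod.ext_iff]
          omega
    · rintro ((⟨⟨a, b⟩, ⟨⟨ha, hb⟩, hmA, hnpA⟩, heq⟩ | ⟨⟨a, b⟩, ⟨⟨ha, hb⟩, hmB, hnpB⟩, heq⟩) | hsing)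
      · simp [hf, Prod.ext_iff] at heq
        obtain ⟨rfl, rfl⟩ := heq
        refine ⟨⟨by omega, by omega⟩, mA a b hmA, ?_⟩
        intro hpy
        exact hnpA ((pyA (B := B) hb).mp hpy)
      · simp [hg, Prod.ext_iff] at heq
        obtain ⟨rfl, rfl⟩ := heq
        have e1 : a + (L+2) = L + 2 + a := by omega
        have e2 : b + (L+2) = L + 2 + b := by omega
        refine ⟨⟨by omega, by omega⟩, ?_, ?_⟩
        · rw [e1, e2]; exact mB a b hmB
        · intro hpy
          rw [e1, e2] at hpy
          exact hnpB ((pyB (A := A) (le_of_lt hmB.1)).mp hpy)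
      · by_cases hpyr : Pyr A
        · rw [if_pos hpyr] at hsing
          simp at hsing
        · rw [if_neg hpyr] at hsing
          simp at hsing
          obtain ⟨rfl, rfl⟩ := hsing
          refine ⟨⟨by omega, by omega⟩, m0 hA, ?_⟩
          intro hpy
          exact hpyr ((py0 (B := B) hA).mp hpy)
  have hd1 : Disjoint (FA.image f) (FB.image g) := by
    rw [Finset.disjoint_left]
    rintro ⟨i, j⟩ h1 h2
    simp [hf, hFA, Prod.ext_iff] at h1
    simp [hg, hFB, Prod.ext_iff] at h2
    obtain ⟨a, b, ⟨⟨ha, hb⟩, _⟩, hia, hjb⟩ := h1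
    obtain ⟨a', b', _, hia', hjb'⟩ := h2
    omega
  have hd2 : Disjoint (FA.image f ∪ FB.image g)
      (if Pyr A then (∅ : Finset (ℕ×ℕ)) else {(0, L+1)}) := by
    by_cases hpyr : Pyr A
    · rw [if_pos hpyr]; simp
    · rw [if_neg hpyr]
      rw [Finset.disjoint_right]
      rintro ⟨i, j⟩ hs hu
      simp at hs
      obtain ⟨rfl, rfl⟩ := hs
      simp only [hf, hg, hFA, hFB, Finset.mem_union, Finset.mem_image, Prod.ext_iff] at hu
      rcases hu with ⟨⟨a, b⟩, _, h0, _⟩ | ⟨⟨a, b⟩, _, h0, _⟩ <;> omega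
  have : exteriorPairs p = FP.card := rfl
  rw [this, hset, Finset.card_union_of_disjoint hd2, Finset.card_union_of_disjoint hd1,
    Finset.card_image_of_injective _ hinjf, Finset.card_image_of_injective _ hinjg]
  have hA' : exteriorPairs A = FA.card := rfl
  have hB' : exteriorPairs B = FB.card := rfl
  rw [← hA', ← hB']
  by_cases hpyr : Pyr A <;> simp [hpyr]

end Decomp4


section Counting

/-- semilength -/
def sl (q : List Bool) : ℕ := q.count true

lemma finite_of_length_bound {α : Type*} [Finite α] {P : List α → Prop} {n : ℕ}
    (h : ∀ q, P q → q.length ≤ n) : Finite {q : List α // P q} := by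
  have hsub : {q : List α | P q} ⊆ {l : List α | l.length ≤ n} := fun q hq => h q hq
  have := ((List.finite_length_le α n).subset hsub).to_subtype
  exact this

lemma len_of_dyck_sl {q : List Bool} {n : ℕ} (h : Dyck q) (hsl : sl q = n) :
    q.length = 2 * n := by
  have h1 := length_eq_counts q
  have h2 := h.1
  unfold sl at hsl
  omega

lemma nat_card_fiber_split {α : Type*} (R : α → Prop) (f : α → ℕ × ℕ) (t : Finset (ℕ × ℕ))
    [Finite {x // R x}] (hmem : ∀ x, R x → f x ∈ t) :
    Nat.card {x // R x} = ∑ ab ∈ t, Nat.card {x // R x ∧ f x = ab} := by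
  classical
  letI : Fintype {x // R x} := Fintype.ofFinite _
  have key := Finset.card_eq_sum_card_fiberwise (s := (Finset.univ : Finset {x // R x}))
      (t := t) (f := fun x => f x.1) (fun x _ => hmem x.1 x.2)
  rw [Nat.card_eq_fintype_card]
  rw [show Fintype.card {x // R x} = (Finset.univ : Finset {x // R x}).card from rfl, key]
  refine Finset.sum_congr rfl ?_
  intro ab _
  rw [← Fintype.card_subtype]
  have e : {y : {x // R x} // f y.1 = ab} ≃ {x // R x ∧ f x = ab} :=
    { toFun := fun y => ⟨y.1.1, y.1.2, y.2⟩
      invFun := fun x => ⟨⟨x.1, x.2.1⟩, x.2.2⟩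
      left_inv := fun y => rfl
      right_inv := fun x => rfl }
  rw [← Nat.card_eq_fintype_card, Nat.card_congr e]

lemma nat_card_prop_split {α : Type*} (R S : α → Prop) [Finite {x // R x}] :
    Nat.card {x // R x} = Nat.card {x // R x ∧ S x} + Nat.card {x // R x ∧ ¬ S x} := by
  classical
  have e1 : {y : {x // R x} // S y.1} ≃ {x // R x ∧ S x} :=
    Equiv.subtypeSubtypeEquivSubtypeInter R S
  have e2 : {y : {x // R x} // ¬ S y.1} ≃ {x // R x ∧ ¬ S x} :=
    Equiv.subtypeSubtypeEquivSubtypeInter R (fun x => ¬ S x)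
  have e3 := Equiv.sumCompl (fun y : {x // R x} => S y.1)
  have hf1 : Finite {y : {x // R x} // S y.1} := Subtype.finite
  have hf2 : Finite {y : {x // R x} // ¬ S y.1} := Subtype.finite
  rw [← Nat.card_congr e3, Nat.card_sum, Nat.card_congr e1, Nat.card_congr e2]

lemma nat_card_prod_split {α β : Type*} (P : α → Prop) (Q : β → Prop) :
    Nat.card {r : α × β // P r.1 ∧ Q r.2} = Nat.card {a // P a} * Nat.card {b // Q b} := by
  rw [Nat.card_congr (Equiv.subtypeProdEquivProd), Nat.card_prod]

/-- number of dyck paths of semilength n with k exterior pairs -/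
noncomputable def cnt (n k : ℕ) : ℕ :=
  Nat.card {q : List Bool // Dyck q ∧ sl q = n ∧ exteriorPairs q = k}

/-- non-pyramid count -/
noncomputable def cnp (n k : ℕ) : ℕ :=
  Nat.card {q : List Bool // (Dyck q ∧ sl q = n ∧ exteriorPairs q = k) ∧ ¬ Pyr q}

instance cnt_finite (n k : ℕ) : Finite {q : List Bool // Dyck q ∧ sl q = n ∧ exteriorPairs q = k} :=
  finite_of_length_bound (n := 2*n) (fun q hq => le_of_eq (len_of_dyck_sl hq.1 hq.2.1))

lemma sl_pyr (t : ℕ) : sl (List.replicate t true ++ List.replicate t false) = t := by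
  unfold sl
  simp [List.count_append, List.count_replicate]

lemma cnt_split (n k : ℕ) : cnt n k = cnp n k + (if k = 0 then 1 else 0) := by
  have hps := nat_card_prop_split
    (fun q : List Bool => Dyck q ∧ sl q = n ∧ exteriorPairs q = k) (fun q => ¬ Pyr q)
  have h2 : Nat.card {q : List Bool //
      (Dyck q ∧ sl q = n ∧ exteriorPairs q = k) ∧ ¬¬ Pyr q} = (if k = 0 then 1 else 0) := by
    rcases Nat.eq_zero_or_pos k with rfl | hk
    · rw [if_pos rfl]
      rw [Nat.card_eq_one_iff_exists]
      refine ⟨⟨List.replicate n true ++ List.replicate n false,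
        ⟨dyck_pyr n, sl_pyr n, ep_pyr n⟩, not_not_intro ⟨n, rfl⟩⟩, ?_⟩
      rintro ⟨q, ⟨hd, hsl, hep⟩, hpyr⟩
      rw [not_not] at hpyr
      obtain ⟨t, rfl⟩ := hpyr
      have hslt := sl_pyr t
      have : t = n := by rw [hsl] at hslt; omega
      subst this
      rfl
    · rw [if_neg (by omega)]
      rw [Nat.card_eq_zero]
      left
      constructor
      rintro ⟨q, ⟨hd, hsl, hep⟩, hpyr⟩
      rw [not_not] at hpyr
      obtain ⟨t, rfl⟩ := hpyr
      rw [ep_pyr t] at hep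
      omega
  rw [cnt, hps, h2, cnp, Nat.add_comm]

lemma cnt_zero (k : ℕ) : cnt 0 k = if k = 0 then 1 else 0 := by
  rcases Nat.eq_zero_or_pos k with rfl | hk
  · rw [if_pos rfl, cnt, Nat.card_eq_one_iff_exists]
    refine ⟨⟨[], dyck_nil, rfl, ep_nil⟩, ?_⟩
    rintro ⟨q, hd, hsl, hep⟩
    have hlen := len_of_dyck_sl hd hsl
    have : q = [] := List.length_eq_zero_iff.mp (by omega)
    subst this
    rfl
  · rw [if_neg (by omega), cnt, Nat.card_eq_zero]
    left
    constructor
    rintro ⟨q, hd, hsl, hep⟩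
    have hlen := len_of_dyck_sl hd hsl
    have : q = [] := List.length_eq_zero_iff.mp (by omega)
    subst this
    rw [ep_nil] at hep
    omega

end Counting


section Master

lemma dyck_compound {A B : List Bool} (hA : Dyck A) (hB : Dyck B) :
    Dyck (true :: A ++ false :: B) := by
  constructor
  · simp [List.count_append, List.count_cons]
    have := hA.1
    have := hB.1
    omega
  · intro i
    rcases Nat.eq_zero_or_pos i with rfl | hi
    · simp
    have h0 : (true :: A ++ false :: B).take i =
        true :: ((A ++ false :: B).take (i-1)) := by
      show (true :: (A ++ false :: B)).take i = _
      cases i with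
      | zero => omega
      | succ m => simp [List.take_succ_cons]
    rw [h0, List.take_append]
    rcases le_or_gt (i-1) A.length with h3 | h3
    · rw [Nat.sub_eq_zero_of_le h3, List.take_zero, List.append_nil]
      simp [List.count_cons]
      have := hA.2 (i-1)
      omega
    · have h4 : (false :: B).take (i - 1 - A.length) =
          false :: B.take (i - 1 - A.length - 1) := by
        cases h5 : i - 1 - A.length with
        | zero => omega
        | succ m => simp [List.take_succ_cons]
      rw [h4, List.take_of_length_le (show A.length ≤ i-1 by omega)]
      simp [List.count_append, List.count_cons]
      have := hA.1
      have := hB.2 (i - 1 - A.length - 1)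
      omega

lemma sl_compound (A B : List Bool) :
    sl (true :: A ++ false :: B) = sl A + sl B + 1 := by
  unfold sl
  simp [List.count_append, List.count_cons]

lemma finite_pair_of_length_bound {P : List Bool × List Bool → Prop} {m1 m2 : ℕ}
    (h : ∀ r, P r → r.1.length ≤ m1 ∧ r.2.length ≤ m2) : Finite {r // P r} := by
  have hfin : ({l : List Bool | l.length ≤ m1} ×ˢ {l : List Bool | l.length ≤ m2}).Finite :=
    (List.finite_length_le Bool m1).prod (List.finite_length_le Bool m2)
  have hsub : {r : List Bool × List Bool | P r} ⊆
      {l : List Bool | l.length ≤ m1} ×ˢ {l : List Bool | l.length ≤ m2} := by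
    rintro ⟨x, y⟩ hr
    exact ⟨(h _ hr).1, (h _ hr).2⟩
  exact (hfin.subset hsub).to_subtype

lemma card_pyr_sl (a : ℕ) : Nat.card {A : List Bool // Pyr A ∧ sl A = a} = 1 := by
  rw [Nat.card_eq_one_iff_exists]
  refine ⟨⟨List.replicate a true ++ List.replicate a false, ⟨a, rfl⟩, sl_pyr a⟩, ?_⟩
  rintro ⟨q, ⟨t, rfl⟩, hsl⟩
  have := sl_pyr t
  have : t = a := by rw [hsl] at this; omega
  subst this
  rfl

open scoped Classical in
theorem cnt_rec (n k : ℕ) :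
    cnt (n+1) k = ∑ ab ∈ Finset.HasAntidiagonal.antidiagonal n,
      (cnt ab.2 k + if k = 0 then 0
        else ∑ ij ∈ Finset.HasAntidiagonal.antidiagonal (k-1), cnp ab.1 ij.1 * cnt ab.2 ij.2) := by
  classical
  -- the master set of pairs
  set R : List Bool × List Bool → Prop := fun r =>
    (Dyck r.1 ∧ Dyck r.2) ∧ (sl r.1 + sl r.2 = n ∧
      exteriorPairs r.1 + exteriorPairs r.2 + (if Pyr r.1 then 0 else 1) = k) with hR
  have hfinR : Finite {r // R r} := by
    apply finite_pair_of_length_bound (m1 := 2*n) (m2 := 2*n)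
    rintro ⟨x, y⟩ ⟨⟨hd1, hd2⟩, hsl, _⟩
    constructor
    · rw [len_of_dyck_sl hd1 rfl]; omega
    · rw [len_of_dyck_sl hd2 rfl]; omega
  -- step A : bijection
  have hstepA : cnt (n+1) k = Nat.card {r // R r} := by
    rw [cnt]
    apply Nat.card_congr
    symm
    apply Equiv.ofBijective (f := fun r : {r // R r} =>
      (⟨true :: r.1.1 ++ false :: r.1.2, by
        obtain ⟨⟨hd1, hd2⟩, hsl, hep⟩ := r.2
        refine ⟨dyck_compound hd1 hd2, ?_, ?_⟩
        · rw [sl_compound]; omega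
        · rw [ep_decomp hd1 hd2]; exact hep⟩ :
        {q : List Bool // Dyck q ∧ sl q = n+1 ∧ exteriorPairs q = k}))
    constructor
    · rintro ⟨⟨A, B⟩, hr⟩ ⟨⟨A', B'⟩, hr'⟩ h
      simp only [Subtype.mk.injEq] at h
      obtain ⟨h1, h2⟩ := decomp_unique hr.1.1 hr'.1.1 h
      exact Subtype.ext (Prod.ext h1 h2)
    · rintro ⟨q, hd, hsl, hep⟩
      have hne : q ≠ [] := by
        intro h
        rw [h] at hsl
        simp [sl] at hsl
      obtain ⟨A, B, hA, hB, rfl⟩ := exists_decomp hd hne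
      rw [sl_compound] at hsl
      rw [ep_decomp hA hB] at hep
      refine ⟨⟨(A, B), ⟨hA, hB⟩, ?_, ?_⟩, rfl⟩
      · show sl A + sl B = n
        omega
      · exact hep
  rw [hstepA]
  -- step B : fiber split over semilengths
  rw [nat_card_fiber_split R (fun r => (sl r.1, sl r.2)) (Finset.HasAntidiagonal.antidiagonal n)
    (fun r hr => by rw [Finset.HasAntidiagonal.mem_antidiagonal]; exact hr.2.1)]
  refine Finset.sum_congr rfl ?_
  rintro ⟨a, b⟩ hab
  rw [Finset.HasAntidiagonal.mem_antidiagonal] at hab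
  -- now fix semilengths
  have hiff1 : ∀ r : List Bool × List Bool,
      (R r ∧ (sl r.1, sl r.2) = (a, b)) ↔
      ((Dyck r.1 ∧ Dyck r.2 ∧ sl r.1 = a ∧ sl r.2 = b) ∧
        exteriorPairs r.1 + exteriorPairs r.2 + (if Pyr r.1 then 0 else 1) = k) := by
    rintro ⟨x, y⟩
    rw [hR]
    simp only [Prod.mk.injEq]
    constructor
    · rintro ⟨⟨⟨h1, h2⟩, h3, h4⟩, h5, h6⟩
      exact ⟨⟨h1, h2, h5, h6⟩, h4⟩
    · rintro ⟨⟨h1, h2, h3, h4⟩, h5⟩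
      exact ⟨⟨⟨h1, h2⟩, by omega, h5⟩, h3, h4⟩
  rw [Nat.card_congr (Equiv.subtypeEquivRight hiff1)]
  set R2 : List Bool × List Bool → Prop := fun r =>
    (Dyck r.1 ∧ Dyck r.2 ∧ sl r.1 = a ∧ sl r.2 = b) ∧
      exteriorPairs r.1 + exteriorPairs r.2 + (if Pyr r.1 then 0 else 1) = k with hR2
  have hfinR2 : Finite {r // R2 r} := by
    apply finite_pair_of_length_bound (m1 := 2*a) (m2 := 2*b)
    rintro ⟨x, y⟩ ⟨⟨hd1, hd2, hsl1, hsl2⟩, _⟩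
    exact ⟨le_of_eq (len_of_dyck_sl hd1 hsl1), le_of_eq (len_of_dyck_sl hd2 hsl2)⟩
  -- step C : split by pyramid-ness of the first component
  rw [nat_card_prop_split R2 (fun r => Pyr r.1)]
  congr 1
  · -- pyramid branch : card = cnt b k
    have hiff2 : ∀ r : List Bool × List Bool,
        (R2 r ∧ Pyr r.1) ↔
        ((Pyr r.1 ∧ sl r.1 = a) ∧ (Dyck r.2 ∧ sl r.2 = b ∧ exteriorPairs r.2 = k)) := by
      rintro ⟨x, y⟩
      rw [hR2]
      constructor
      · rintro ⟨⟨⟨h1, h2, h3, h4⟩, h5⟩, h6⟩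
        rw [if_pos h6] at h5
        obtain ⟨t, rfl⟩ := h6
        rw [ep_pyr t] at h5
        exact ⟨⟨⟨t, rfl⟩, h3⟩, h2, h4, by omega⟩
      · rintro ⟨⟨h6, h3⟩, h2, h4, h5⟩
        obtain ⟨t, rfl⟩ := h6
        refine ⟨⟨⟨dyck_pyr t, h2, h3, h4⟩, ?_⟩, ⟨t, rfl⟩⟩
        rw [if_pos ⟨t, rfl⟩, ep_pyr t]
        omega
    rw [Nat.card_congr (Equiv.subtypeEquivRight hiff2),
      Nat.card_congr (Equiv.subtypeProdEquivProd (p := fun x => Pyr x ∧ sl x = a)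
        (q := fun y => Dyck y ∧ sl y = b ∧ exteriorPairs y = k)),
      Nat.card_prod, card_pyr_sl, one_mul, cnt]
  · -- non-pyramid branch
    rcases Nat.eq_zero_or_pos k with rfl | hk
    · rw [if_pos rfl]
      rw [Nat.card_eq_zero]
      left
      constructor
      rintro ⟨⟨x, y⟩, ⟨⟨h1, h2, h3, h4⟩, h5⟩, h6⟩
      rw [if_neg h6] at h5
      omega
    · rw [if_neg (by omega)]
      have hiff3 : ∀ r : List Bool × List Bool,
          (R2 r ∧ ¬ Pyr r.1) ↔
          (((Dyck r.1 ∧ ¬ Pyr r.1 ∧ sl r.1 = a) ∧ (Dyck r.2 ∧ sl r.2 = b)) ∧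
            exteriorPairs r.1 + exteriorPairs r.2 = k - 1) := by
        rintro ⟨x, y⟩
        rw [hR2]
        constructor
        · rintro ⟨⟨⟨h1, h2, h3, h4⟩, h5⟩, h6⟩
          rw [if_neg h6] at h5
          exact ⟨⟨⟨h1, h6, h3⟩, h2, h4⟩, by omega⟩
        · rintro ⟨⟨⟨h1, h6, h3⟩, h2, h4⟩, h5⟩
          refine ⟨⟨⟨h1, h2, h3, h4⟩, ?_⟩, h6⟩
          rw [if_neg h6]
          omega
      rw [Nat.card_congr (Equiv.subtypeEquivRight hiff3)]
      set R3 : List Bool × List Bool → Prop := fun r =>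
        (Dyck r.1 ∧ ¬ Pyr r.1 ∧ sl r.1 = a) ∧ (Dyck r.2 ∧ sl r.2 = b) with hR3
    
      have hfinR3 : Finite {r // R3 r ∧ exteriorPairs r.1 + exteriorPairs r.2 = k - 1} := by
        apply finite_pair_of_length_bound (m1 := 2*a) (m2 := 2*b)
        rintro ⟨x, y⟩ ⟨⟨⟨hd1, _, hsl1⟩, hd2, hsl2⟩, _⟩
        exact ⟨le_of_eq (len_of_dyck_sl hd1 hsl1), le_of_eq (len_of_dyck_sl hd2 hsl2)⟩
      rw [nat_card_fiber_split
        (fun r : List Bool × List Bool => R3 r ∧ exteriorPairs r.1 + exteriorPairs r.2 = k - 1)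
        (fun r => (exteriorPairs r.1, exteriorPairs r.2)) (Finset.HasAntidiagonal.antidiagonal (k-1))
        (fun r hr => by rw [Finset.HasAntidiagonal.mem_antidiagonal]; exact hr.2)]
      refine Finset.sum_congr rfl ?_
      rintro ⟨i, j⟩ hij
      rw [Finset.HasAntidiagonal.mem_antidiagonal] at hij
      have hiff4 : ∀ r : List Bool × List Bool,
          ((R3 r ∧ exteriorPairs r.1 + exteriorPairs r.2 = k - 1) ∧
            (exteriorPairs r.1, exteriorPairs r.2) = (i, j)) ↔
          (((Dyck r.1 ∧ sl r.1 = a ∧ exteriorPairs r.1 = i) ∧ ¬ Pyr r.1) ∧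
            (Dyck r.2 ∧ sl r.2 = b ∧ exteriorPairs r.2 = j)) := by
        rintro ⟨x, y⟩
        rw [hR3]
        simp only [Prod.mk.injEq]
        constructor
        · rintro ⟨⟨⟨⟨h1, h2, h3⟩, h4, h5⟩, h6⟩, h7, h8⟩
          exact ⟨⟨⟨h1, h3, h7⟩, h2⟩, h4, h5, h8⟩
        · rintro ⟨⟨⟨h1, h3, h7⟩, h2⟩, h4, h5, h8⟩
          exact ⟨⟨⟨⟨h1, h2, h3⟩, h4, h5⟩, by omega⟩, h7, h8⟩
      rw [Nat.card_congr (Equiv.subtypeEquivRight hiff4),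
        Nat.card_congr (Equiv.subtypeProdEquivProd
          (p := fun x => (Dyck x ∧ sl x = a ∧ exteriorPairs x = i) ∧ ¬ Pyr x)
          (q := fun y => Dyck y ∧ sl y = b ∧ exteriorPairs y = j)),
        Nat.card_prod, cnp, cnt]

end Master


section Series
open MvPowerSeries

/-- the exponent (n, k) as a finsupp -/
noncomputable def D2 (n k : ℕ) : Fin 2 →₀ ℕ := Finsupp.single 0 n + Finsupp.single 1 k

lemma D2_apply0 (n k : ℕ) : D2 n k 0 = n := by
  simp [D2, Finsupp.single_apply]

lemma D2_apply1 (n k : ℕ) : D2 n k 1 = k := by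
  simp [D2, Finsupp.single_apply]

lemma eq_D2 (u : Fin 2 →₀ ℕ) : u = D2 (u 0) (u 1) := by
  ext x
  fin_cases x
  · simp [D2_apply0]
  · simp [D2_apply1]

lemma D2_eq_zero_iff (n k : ℕ) : D2 n k = 0 ↔ n = 0 ∧ k = 0 := by
  constructor
  · intro h
    have h0 := congrArg (fun f : Fin 2 →₀ ℕ => f 0) h
    have h1 := congrArg (fun f : Fin 2 →₀ ℕ => f 1) h
    simp [D2_apply0, D2_apply1] at h0 h1
    exact ⟨h0, h1⟩
  · rintro ⟨rfl, rfl⟩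
    simp [D2]

lemma D2_add (a i b j : ℕ) : D2 a i + D2 b j = D2 (a+b) (i+j) := by
  ext x
  fin_cases x
  · simp [D2_apply0]
  · simp [D2_apply1]

lemma single0_le_D2 (n k : ℕ) : Finsupp.single 0 1 ≤ D2 n k ↔ 1 ≤ n := by
  rw [Finsupp.single_le_iff, D2_apply0]

lemma single1_le_D2 (n k : ℕ) : Finsupp.single 1 1 ≤ D2 n k ↔ 1 ≤ k := by
  rw [Finsupp.single_le_iff, D2_apply1]

lemma D2_sub_single0 (n k : ℕ) : D2 n k - Finsupp.single 0 1 = D2 (n-1) k := by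
  ext x
  fin_cases x
  · rw [Finsupp.tsub_apply]
    simp [D2_apply0, Finsupp.single_apply]
  · rw [Finsupp.tsub_apply]
    simp [D2_apply1, Finsupp.single_apply]

lemma D2_sub_single1 (n k : ℕ) : D2 n k - Finsupp.single 1 1 = D2 n (k-1) := by
  ext x
  fin_cases x
  · rw [Finsupp.tsub_apply]
    simp [D2_apply0, Finsupp.single_apply]
  · rw [Finsupp.tsub_apply]
    simp [D2_apply1, Finsupp.single_apply]

lemma coeff_X0_mul (φ : MvPowerSeries (Fin 2) ℚ) (n k : ℕ) :
    coeff (D2 n k) (X 0 * φ) =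
      if 1 ≤ n then coeff (D2 (n-1) k) φ else 0 := by
  rw [show (X 0 : MvPowerSeries (Fin 2) ℚ) = monomial (Finsupp.single 0 1) 1 from rfl,
    coeff_monomial_mul]
  by_cases h : 1 ≤ n
  · rw [if_pos ((single0_le_D2 n k).mpr h), if_pos h, D2_sub_single0, one_mul]
  · rw [if_neg (fun hc => h ((single0_le_D2 n k).mp hc)), if_neg h]

lemma coeff_X1_mul (φ : MvPowerSeries (Fin 2) ℚ) (n k : ℕ) :
    coeff (D2 n k) (X 1 * φ) =
      if 1 ≤ k then coeff (D2 n (k-1)) φ else 0 := by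
  rw [show (X 1 : MvPowerSeries (Fin 2) ℚ) = monomial (Finsupp.single 1 1) 1 from rfl,
    coeff_monomial_mul]
  by_cases h : 1 ≤ k
  · rw [if_pos ((single1_le_D2 n k).mpr h), if_pos h, D2_sub_single1, one_mul]
  · rw [if_neg (fun hc => h ((single1_le_D2 n k).mp hc)), if_neg h]

lemma coeff_mul_D2 (F G' : MvPowerSeries (Fin 2) ℚ) (n k : ℕ) :
    coeff (D2 n k) (F * G') = ∑ ab ∈ Finset.HasAntidiagonal.antidiagonal n, ∑ ij ∈ Finset.HasAntidiagonal.antidiagonal k,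
      coeff (D2 ab.1 ij.1) F * coeff (D2 ab.2 ij.2) G' := by
  classical
  rw [coeff_mul]
  rw [← Finset.sum_product']
  refine Finset.sum_nbij' (i := fun p : (Fin 2 →₀ ℕ) × (Fin 2 →₀ ℕ) =>
      ((p.1 0, p.2 0), (p.1 1, p.2 1)))
    (j := fun q : (ℕ × ℕ) × (ℕ × ℕ) => (D2 q.1.1 q.2.1, D2 q.1.2 q.2.2))
    ?_ ?_ ?_ ?_ ?_
  · rintro ⟨u, v⟩ hm
    rw [Finset.HasAntidiagonal.mem_antidiagonal] at hm
    have h0 := congrArg (fun f : Fin 2 →₀ ℕ => f 0) hm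
    have h1 := congrArg (fun f : Fin 2 →₀ ℕ => f 1) hm
    simp only [Finsupp.add_apply, D2_apply0, D2_apply1] at h0 h1
    simp only [Finset.mem_product, Finset.HasAntidiagonal.mem_antidiagonal]
    exact ⟨h0, h1⟩
  · rintro ⟨⟨a, b⟩, ⟨i, j⟩⟩ hm
    simp only [Finset.mem_product, Finset.HasAntidiagonal.mem_antidiagonal] at hm
    rw [Finset.HasAntidiagonal.mem_antidiagonal, D2_add, hm.1, hm.2]
  · rintro ⟨u, v⟩ _
    simp only [Prod.mk.injEq]
    exact ⟨(eq_D2 u).symm, (eq_D2 v).symm⟩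
  · rintro ⟨⟨a, b⟩, ⟨i, j⟩⟩ _
    simp only [Prod.mk.injEq, D2_apply0, D2_apply1]
  · rintro ⟨u, v⟩ _
    rw [← eq_D2 u, ← eq_D2 v]

end Series

end Ext



namespace Ext

section Final
open MvPowerSeries

noncomputable def G : MvPowerSeries (Fin 2) ℚ := fun d => if d 1 = 0 then 1 else 0

lemma coeff_G (d : Fin 2 →₀ ℕ) : coeff d G = if d 1 = 0 then 1 else 0 := rfl

lemma coeff_E (n k : ℕ) : coeff (D2 n k) E = (cnt n k : ℚ) := by
  have h0 : coeff (D2 n k) E =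
      (Nat.card {p : List Bool //
        IsDyckPath (D2 n k 0) p ∧ exteriorPairs p = D2 n k 1} : ℚ) := rfl
  rw [h0, D2_apply0, D2_apply1, cnt]
  norm_cast
  exact Nat.card_congr (Equiv.subtypeEquivRight (fun q => by
    rw [isDyckPath_iff]
    unfold sl
    tauto))

lemma sub_single0_apply1 (d : Fin 2 →₀ ℕ) :
    (d - (Finsupp.single 0 1 : Fin 2 →₀ ℕ)) 1 = d 1 := by
  rw [Finsupp.tsub_apply]
  simp [Finsupp.single_apply]

lemma finsupp_eq_zero_iff (u : Fin 2 →₀ ℕ) : u = 0 ↔ u 0 = 0 ∧ u 1 = 0 := by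
  constructor
  · rintro rfl; simp
  · rintro ⟨h0, h1⟩
    rw [eq_D2 u, h0, h1, D2_eq_zero_iff]
    exact ⟨rfl, rfl⟩

lemma G_mul : G * (1 - X 0) = 1 := by
  apply MvPowerSeries.ext
  intro d
  rw [mul_sub, mul_one, map_sub, coeff_one,
    show (X 0 : MvPowerSeries (Fin 2) ℚ) = monomial (Finsupp.single 0 1) 1 from rfl,
    coeff_mul_monomial, coeff_G]
  by_cases h1 : d 1 = 0 <;> by_cases h0 : 1 ≤ d 0
  · rw [if_pos h1, if_pos (Finsupp.single_le_iff.mpr h0), coeff_G, sub_single0_apply1,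
      if_pos h1, if_neg (by rw [finsupp_eq_zero_iff]; omega)]
    ring
  · rw [if_pos h1, if_neg (fun hc => h0 (Finsupp.single_le_iff.mp hc)),
      if_pos (by rw [finsupp_eq_zero_iff]; omega)]
    ring
  · rw [if_neg h1, if_pos (Finsupp.single_le_iff.mpr h0), coeff_G, sub_single0_apply1,
      if_neg h1, if_neg (by rw [finsupp_eq_zero_iff]; omega)]
    ring
  · rw [if_neg h1, if_neg (fun hc => h0 (Finsupp.single_le_iff.mp hc)),
      if_neg (by rw [finsupp_eq_zero_iff]; omega)]
    ring

lemma coeff_M (a i : ℕ) :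
    coeff (D2 a i) ((X 1) * E + (1 - X 1) * G) =
      (if 1 ≤ i then (cnt a (i-1) : ℚ) else 0) +
        ((if i = 0 then 1 else 0) - (if i = 1 then 1 else 0)) := by
  rw [map_add, coeff_X1_mul, sub_mul, one_mul, map_sub, coeff_G, D2_apply1, coeff_X1_mul,
    coeff_G, D2_apply1]
  congr 1
  · by_cases h : 1 ≤ i
    · rw [if_pos h, if_pos h, coeff_E]
    · rw [if_neg h, if_neg h]
  · congr 1
    by_cases h : 1 ≤ i
    · rw [if_pos h]
      by_cases h2 : i = 1
      · rw [if_pos (by omega), if_pos h2]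
      · rw [if_neg (by omega), if_neg h2]
    · rw [if_neg h, if_neg (by omega)]

lemma cnp_cast (a i : ℕ) :
    (cnp a i : ℚ) = (cnt a i : ℚ) - (if i = 0 then 1 else 0) := by
  have := cnt_split a i
  rcases Nat.eq_zero_or_pos i with rfl | hi
  · rw [if_pos rfl] at this ⊢
    push_cast [this]
    ring
  · rw [if_neg (by omega)] at this ⊢
    push_cast [this]
    ring

lemma inner_sum (a b k : ℕ) :
    (∑ ij ∈ Finset.HasAntidiagonal.antidiagonal k,
      ((if 1 ≤ ij.1 then (cnt a (ij.1-1) : ℚ) else 0) +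
        ((if ij.1 = 0 then 1 else 0) - (if ij.1 = 1 then 1 else 0))) * (cnt b ij.2 : ℚ))
    = (cnt b k : ℚ) + (if k = 0 then 0 else ∑ ij ∈ Finset.HasAntidiagonal.antidiagonal (k-1),
        ((cnt a ij.1 : ℚ) - (if ij.1 = 0 then 1 else 0)) * (cnt b ij.2 : ℚ)) := by
  rw [Finset.Nat.sum_antidiagonal_eq_sum_range_succ_mk, Finset.sum_range_succ']
  have hf0 : ((if (1:ℕ) ≤ 0 then (cnt a (0-1) : ℚ) else 0) +
      ((if (0:ℕ) = 0 then (1:ℚ) else 0) - (if (0:ℕ) = 1 then (1:ℚ) else 0))) *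
        (cnt b (k - 0) : ℚ) = (cnt b k : ℚ) := by
    norm_num
  rw [hf0]
  rcases Nat.eq_zero_or_pos k with rfl | hk
  · rw [if_pos rfl]
    simp
  · rw [if_neg (by omega), Finset.Nat.sum_antidiagonal_eq_sum_range_succ_mk,
      show (k-1).succ = k from by omega, add_comm]
    congr 1
    refine Finset.sum_congr rfl ?_
    intro i hi
    rw [Finset.mem_range] at hi
    rw [if_pos (by omega : 1 ≤ i + 1), if_neg (by omega : ¬ i + 1 = 0),
      if_congr (show i + 1 = 1 ↔ i = 0 from by omega) rfl rfl,
      show i + 1 - 1 = i from by omega, show k - (i+1) = k - 1 - i from by omega]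
    ring

theorem E_eq_G_form : E = 1 + (X 0 : MvPowerSeries (Fin 2) ℚ) *
    ((X 1) * E + (1 - X 1) * G) * E := by
  apply MvPowerSeries.ext
  intro d
  rw [eq_D2 d]
  generalize d 0 = n
  generalize d 1 = k
  rw [map_add, coeff_one, mul_assoc, coeff_X0_mul, coeff_E]
  rcases n with _ | m
  · rw [if_neg (show ¬ (1:ℕ) ≤ 0 by omega), cnt_zero,
      if_congr (D2_eq_zero_iff 0 k) rfl rfl]
    by_cases hk : k = 0
    · rw [if_pos hk, if_pos ⟨rfl, hk⟩]
      norm_num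
    · rw [if_neg hk, if_neg (by simp [hk])]
      norm_num
  · rw [if_pos (show (1:ℕ) ≤ m + 1 by omega),
      if_neg (show ¬ D2 (m+1) k = 0 from by
        rw [D2_eq_zero_iff]
        rintro ⟨h, -⟩
        omega),
      show m + 1 - 1 = m from rfl, coeff_mul_D2]
    have hstep : ∀ ab ∈ Finset.HasAntidiagonal.antidiagonal m,
        (∑ ij ∈ Finset.HasAntidiagonal.antidiagonal k,
          coeff (D2 ab.1 ij.1) ((X 1) * E + (1 - X 1) * G) *
            coeff (D2 ab.2 ij.2) E)
        = (cnt ab.2 k : ℚ) + (if k = 0 then 0 else ∑ ij ∈ Finset.HasAntidiagonal.antidiagonal (k-1),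
            ((cnt ab.1 ij.1 : ℚ) - (if ij.1 = 0 then 1 else 0)) * (cnt ab.2 ij.2 : ℚ)) := by
      intro ab _
      rw [← inner_sum ab.1 ab.2 k]
      refine Finset.sum_congr rfl ?_
      intro ij _
      rw [coeff_M, coeff_E]
    rw [Finset.sum_congr rfl hstep, zero_add, cnt_rec m k]
    push_cast
    refine Finset.sum_congr rfl ?_
    intro ab _
    congr 1
    by_cases hk : k = 0
    · simp [hk]
    · rw [if_neg hk, if_neg hk]
      push_cast
      refine Finset.sum_congr rfl ?_
      intro ij _
      rw [cnp_cast]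

end Final
end Ext


open MvPowerSeries in
/-- `E = 1 + x·(y·E + (1-y)/(1-x))·E`. -/
theorem E_equation :
    E = 1 + (X 0 : MvPowerSeries (Fin 2) ℚ) *
      ((X 1) * E + (1 - X 1) * (1 - X 0)⁻¹) * E := by
  have hG : (1 - X 0 : MvPowerSeries (Fin 2) ℚ)⁻¹ = Ext.G :=
    (MvPowerSeries.inv_eq_iff_mul_eq_one (by simp)).mpr Ext.G_mul
  rw [hG]
  exact Ext.E_eq_G_form
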